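/- Let A and Ω_A be real symmetric m×m matrices, B, Ω_B ∈ ℝ^m, λ > 0 and d ∈ (0,1). Suppose A ⪰ λ I_m and ‖Ω_A‖ ≤ d λ (spectral norm). Define x* = −A^{-1}B and x(∞) = −(A+Ω_A)^{-1}(B+Ω_B). Then ‖x(∞) − x*‖² ≤ (2 / ((1−d)² λ²)) · ( ‖x*‖² ‖Ω_A‖_F² + ‖Ω_B‖² ), where ‖·‖_F denotes the Frobenius norm. -/

import Mathlib

open Matrix Finset

lemma posdef_of_lb (m : ℕ) (M : Matrix (Fin m) (Fin m) ℝ) (hsym : M.IsSymm)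
    (lam : ℝ) (hlam : 0 < lam)
    (h : ∀ x : Fin m → ℝ, lam * ∑ k, (x k) ^ 2 ≤ x ⬝ᵥ M.mulVec x) : M.PosDef := by
  rw [Matrix.posDef_iff_dotProduct_mulVec]
  constructor
  · ext i j
    simp [Matrix.conjTranspose_apply]
    exact hsym.apply i j
  · intro x hx
    rw [star_trivial]
    have h1 := h x
    have h2 : 0 < ∑ k, (x k) ^ 2 := by
      obtain ⟨k, hk⟩ := Function.ne_iff.mp hx
      exact Finset.sum_pos' (fun i _ => sq_nonneg _)
        ⟨k, Finset.mem_univ k, by simpa using pow_pos (abs_pos.mpr hk) 2⟩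
    nlinarith


set_option maxHeartbeats 1600000 in
/-- Let `A, Ω_A` be real symmetric `m×m` matrices, `B, Ω_B ∈ ℝ^m`,
`λ > 0`, `d ∈ (0,1)`. Suppose `A ⪰ λ Iₘ` (i.e. `xᵀ A x ≥ λ‖x‖²` for all `x`, with
`‖x‖² = ∑ k, (x k)²` the squared Euclidean norm) and that the spectral norm of `Ω_A`
satisfies `‖Ω_A‖ ≤ dλ` (expressed by its defining operator property
`‖Ω_A x‖ ≤ dλ‖x‖` for all `x`). With `x* = -A⁻¹ B` and `x(∞) = -(A+Ω_A)⁻¹(B+Ω_B)`,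
`‖x(∞) - x*‖² ≤ (2/((1-d)²λ²)) (‖x*‖² ‖Ω_A‖_F² + ‖Ω_B‖²)`, where
`‖Ω_A‖_F² = ∑ p, ∑ q, (Ω_A p q)²` is the squared Frobenius norm. -/
theorem stmt3 (m : ℕ) (A ΩA : Matrix (Fin m) (Fin m) ℝ)
    (hAsym : A.IsSymm) (hΩAsym : ΩA.IsSymm)
    (B ΩB : Fin m → ℝ)
    (lam d : ℝ) (hlam : 0 < lam) (hd : d ∈ Set.Ioo (0 : ℝ) 1)
    (hApd : ∀ x : Fin m → ℝ, lam * ∑ k, (x k) ^ 2 ≤ x ⬝ᵥ A.mulVec x)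
    (hΩAnorm : ∀ x : Fin m → ℝ,
      Real.sqrt (∑ k, (ΩA.mulVec x k) ^ 2) ≤ d * lam * Real.sqrt (∑ k, (x k) ^ 2)) :
    let xstar : Fin m → ℝ := -(A⁻¹.mulVec B)
    let xinf : Fin m → ℝ := -((A + ΩA)⁻¹.mulVec (B + ΩB))
    ∑ k, (xinf k - xstar k) ^ 2 ≤
      2 / ((1 - d) ^ 2 * lam ^ 2) *
        ((∑ k, (xstar k) ^ 2) * (∑ p, ∑ q, (ΩA p q) ^ 2) + ∑ k, (ΩB k) ^ 2) := by
  intro xstar xinf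
  obtain ⟨hd0, hd1⟩ := hd
  -- squared operator-norm bound for ΩA
  have hΩsq : ∀ x : Fin m → ℝ,
      ∑ k, (ΩA.mulVec x k) ^ 2 ≤ (d * lam) ^ 2 * ∑ k, (x k) ^ 2 := by
    intro x
    have h1 := hΩAnorm x
    have h2 : Real.sqrt (∑ k, (ΩA.mulVec x k) ^ 2) ^ 2 = ∑ k, (ΩA.mulVec x k) ^ 2 :=
      Real.sq_sqrt (Finset.sum_nonneg fun i _ => sq_nonneg _)
    have h3 : Real.sqrt (∑ k, (x k) ^ 2) ^ 2 = ∑ k, (x k) ^ 2 :=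
      Real.sq_sqrt (Finset.sum_nonneg fun i _ => sq_nonneg _)
    nlinarith [Real.sqrt_nonneg (∑ k, (ΩA.mulVec x k) ^ 2),
      Real.sqrt_nonneg (∑ k, (x k) ^ 2), mul_pos hd0 hlam]
  -- lower bound for A + ΩA
  have hSlb : ∀ x : Fin m → ℝ,
      (1 - d) * lam * ∑ k, (x k) ^ 2 ≤ x ⬝ᵥ (A + ΩA).mulVec x := by
    intro x
    have hA := hApd x
    have hcs := Finset.sum_mul_sq_le_sq_mul_sq Finset.univ x (ΩA.mulVec x)
    have hq := hΩsq x
    have hdot : x ⬝ᵥ (A + ΩA).mulVec x = x ⬝ᵥ A.mulVec x + x ⬝ᵥ ΩA.mulVec x := by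
      rw [Matrix.add_mulVec, dotProduct_add]
    have hxn : (0:ℝ) ≤ ∑ k, (x k) ^ 2 := Finset.sum_nonneg fun i _ => sq_nonneg _
    have hip : x ⬝ᵥ ΩA.mulVec x = ∑ k, x k * ΩA.mulVec x k := rfl
    have hb : (x ⬝ᵥ ΩA.mulVec x) ^ 2 ≤ (d * lam * ∑ k, (x k) ^ 2) ^ 2 := by
      rw [hip]
      nlinarith [hcs, hq, hxn]
    have hbn : (0:ℝ) ≤ d * lam * ∑ k, (x k) ^ 2 :=
      mul_nonneg (mul_nonneg hd0.le hlam.le) hxn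
    have hb2 : -(d * lam * ∑ k, (x k) ^ 2) ≤ x ⬝ᵥ ΩA.mulVec x := by
      nlinarith [sq_nonneg (x ⬝ᵥ ΩA.mulVec x + d * lam * ∑ k, (x k) ^ 2)]
    rw [hdot]
    nlinarith [hA]
  have hApos : A.PosDef := posdef_of_lb m A hAsym lam hlam hApd
  have hSsym : (A + ΩA).IsSymm := hAsym.add hΩAsym
  have hSpos : (A + ΩA).PosDef := posdef_of_lb m (A + ΩA) hSsym ((1 - d) * lam)
    (mul_pos (by linarith) hlam) hSlb
  -- the key identities
  have hAx : A.mulVec xstar = -B := by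
    show A.mulVec (-(A⁻¹.mulVec B)) = -B
    rw [Matrix.mulVec_neg, Matrix.mulVec_mulVec, Matrix.mul_nonsing_inv A
      (Matrix.isUnit_iff_isUnit_det A |>.mp hApos.isUnit), Matrix.one_mulVec]
  have hSx : (A + ΩA).mulVec xinf = -(B + ΩB) := by
    show (A + ΩA).mulVec (-((A + ΩA)⁻¹.mulVec (B + ΩB))) = -(B + ΩB)
    rw [Matrix.mulVec_neg, Matrix.mulVec_mulVec, Matrix.mul_nonsing_inv (A + ΩA)
      (Matrix.isUnit_iff_isUnit_det _ |>.mp hSpos.isUnit), Matrix.one_mulVec]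
  set e : Fin m → ℝ := xinf - xstar with he_def
  set r : Fin m → ℝ := ΩA.mulVec xstar + ΩB with hr_def
  have he : (A + ΩA).mulVec e = -r := by
    have : (A + ΩA).mulVec e = (A + ΩA).mulVec xinf - (A + ΩA).mulVec xstar := by
      rw [he_def, Matrix.mulVec_sub]
    rw [this, hSx, Matrix.add_mulVec, hAx, hr_def]
    ext k
    simp [Pi.add_apply, Pi.neg_apply, Pi.sub_apply]
    ring
  set S := ∑ k, (e k) ^ 2 with hS_def
  set R := ∑ k, (r k) ^ 2 with hR_def
  have hSnn : (0:ℝ) ≤ S := Finset.sum_nonneg fun i _ => sq_nonneg _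
  have hRnn : (0:ℝ) ≤ R := Finset.sum_nonneg fun i _ => sq_nonneg _
  -- key chain
  have key1 : (1 - d) * lam * S ≤ -(∑ k, e k * r k) := by
    have h1 := hSlb e
    have h2 : e ⬝ᵥ (A + ΩA).mulVec e = -(∑ k, e k * r k) := by
      rw [he]
      simp [dotProduct, Finset.mul_sum, ← Finset.sum_neg_distrib]
    linarith [h2 ▸ h1]
  have key2 : (∑ k, e k * r k) ^ 2 ≤ S * R :=
    Finset.sum_mul_sq_le_sq_mul_sq Finset.univ e r
  have hc : (0:ℝ) < (1 - d) * lam := mul_pos (by linarith) hlam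
  have key3 : ((1 - d) * lam) ^ 2 * S ^ 2 ≤ S * R := by
    nlinarith [key1, key2, mul_nonneg hc.le hSnn]
  -- bound on R
  have hrow : ∀ p, (ΩA.mulVec xstar p) ^ 2 ≤ (∑ q, (ΩA p q) ^ 2) * ∑ k, (xstar k) ^ 2 := by
    intro p
    have : ΩA.mulVec xstar p = ∑ q, ΩA p q * xstar q := rfl
    rw [this]
    exact Finset.sum_mul_sq_le_sq_mul_sq Finset.univ _ _
  have hu : ∑ p, (ΩA.mulVec xstar p) ^ 2 ≤ (∑ k, (xstar k) ^ 2) * ∑ p, ∑ q, (ΩA p q) ^ 2 := by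
    calc ∑ p, (ΩA.mulVec xstar p) ^ 2
        ≤ ∑ p, (∑ q, (ΩA p q) ^ 2) * ∑ k, (xstar k) ^ 2 :=
          Finset.sum_le_sum fun p _ => hrow p
      _ = (∑ k, (xstar k) ^ 2) * ∑ p, ∑ q, (ΩA p q) ^ 2 := by
          rw [← Finset.sum_mul]; ring
  have key4 : R ≤ 2 * ((∑ k, (xstar k) ^ 2) * (∑ p, ∑ q, (ΩA p q) ^ 2) + ∑ k, (ΩB k) ^ 2) := by
    have h1 : R ≤ 2 * (∑ p, (ΩA.mulVec xstar p) ^ 2) + 2 * ∑ k, (ΩB k) ^ 2 := by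
      rw [hR_def, hr_def]
      have : ∀ k, ((ΩA.mulVec xstar + ΩB) k) ^ 2 ≤
          2 * (ΩA.mulVec xstar k) ^ 2 + 2 * (ΩB k) ^ 2 := by
        intro k
        simp only [Pi.add_apply]
        nlinarith [sq_nonneg (ΩA.mulVec xstar k - ΩB k)]
      calc ∑ k, ((ΩA.mulVec xstar + ΩB) k) ^ 2
          ≤ ∑ k, (2 * (ΩA.mulVec xstar k) ^ 2 + 2 * (ΩB k) ^ 2) :=
            Finset.sum_le_sum fun k _ => this k
        _ = 2 * (∑ p, (ΩA.mulVec xstar p) ^ 2) + 2 * ∑ k, (ΩB k) ^ 2 := by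
            rw [Finset.sum_add_distrib, ← Finset.mul_sum, ← Finset.mul_sum]
    linarith
  -- conclude
  have hTnn : (0:ℝ) ≤ (∑ k, (xstar k) ^ 2) * (∑ p, ∑ q, (ΩA p q) ^ 2) + ∑ k, (ΩB k) ^ 2 := by
    positivity
  have hSe : ∑ k, (xinf k - xstar k) ^ 2 = S := rfl
  rw [hSe]
  have hc2 : (0:ℝ) < (1 - d) ^ 2 * lam ^ 2 :=
    mul_pos (pow_pos (by linarith) 2) (pow_pos hlam 2)
  clear_value S R e r
  rcases eq_or_lt_of_le hSnn with hS0 | hSpos'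
  · rw [← hS0]
    exact mul_nonneg (div_nonneg (by norm_num) hc2.le) hTnn
  · rw [div_mul_eq_mul_div, le_div_iff₀ hc2]
    have hstep : ((1 - d) * lam) ^ 2 * S ≤ R := by
      have h2 : (((1 - d) * lam) ^ 2 * S) * S ≤ R * S := by nlinarith [key3]
      exact le_of_mul_le_mul_right h2 hSpos'
    set T := (∑ k, (xstar k) ^ 2) * (∑ p, ∑ q, (ΩA p q) ^ 2) + ∑ k, (ΩB k) ^ 2 with hT_def
    clear_value T
    clear key1 key2 key3 hu hrow hSlb hΩsq hApd hΩAnorm hSe hAx hSx he hT_def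
    nlinarith [hstep, key4]
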